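/- Let R₀ ≥ 1, 0 < m < 1, and C₂ > 0. Suppose v : ℝ² → ℝ is twice continuously differentiable on {x : |x| ≥ R₀}, v(x) → 0 as |x| → ∞, and |Δv(x) − v(x)| ≤ C₂ e^{−2m|x|} for all |x| ≥ R₀. Then for every β with m < β < min{1, 2m} there exists a constant C₃ > 0 such that |v(x)| ≤ C₃ e^{−β|x|} for all |x| ≥ R₀. -/

import Mathlib

open MeasureTheory Filter

/-- The Euclidean Laplacian on `ℝ²`: the sum of the two pure second partial derivatives. -/
noncomputable def lap2 (f : EuclideanSpace ℝ (Fin 2) → ℝ) (x : EuclideanSpace ℝ (Fin 2)) : ℝ :=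
  ∑ i : Fin 2, iteratedFDeriv ℝ 2 f x ![EuclideanSpace.single i 1, EuclideanSpace.single i 1]

section Aux

lemma second_test_aux {g : ℝ → ℝ} {c : ℝ}
    (hdiff : ∀ᶠ t in nhds (0:ℝ), DifferentiableAt ℝ g t)
    (hD : HasDerivAt (deriv g) c 0) (hmin : IsLocalMin g 0) : 0 ≤ c := by
  by_contra hc
  push_neg at hc
  have h0 : deriv g 0 = 0 := hmin.deriv_eq_zero
  have hslope : Tendsto (slope (deriv g) 0) (nhdsWithin 0 {(0:ℝ)}ᶜ) (nhds c) :=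
    hasDerivAt_iff_tendsto_slope.mp hD
  have hneg : ∀ᶠ t in nhdsWithin 0 {(0:ℝ)}ᶜ, slope (deriv g) 0 t < 0 :=
    hslope.eventually_lt_const hc
  rw [eventually_nhdsWithin_iff] at hneg
  have hall : ∀ᶠ t in nhds (0:ℝ),
      DifferentiableAt ℝ g t ∧ (t ∈ ({(0:ℝ)}ᶜ) → slope (deriv g) 0 t < 0) ∧ g 0 ≤ g t :=
    hdiff.and (hneg.and hmin)
  rw [Metric.eventually_nhds_iff] at hall
  obtain ⟨δ, hδ0, hδ⟩ := hall
  have hmem : ∀ t : ℝ, |t| < δ → DifferentiableAt ℝ g t ∧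
      (t ≠ 0 → slope (deriv g) 0 t < 0) ∧ g 0 ≤ g t := by
    intro t ht
    have := hδ (show dist t 0 < δ by simpa [Real.dist_eq] using ht)
    simpa using this
  have hderivneg : ∀ t : ℝ, 0 < t → t < δ → deriv g t < 0 := by
    intro t ht0 htδ
    have h := (hmem t (by rw [abs_of_pos ht0]; exact htδ)).2.1 (ne_of_gt ht0)
    rw [slope_def_field] at h
    have : (deriv g t - deriv g 0) / (t - 0) < 0 := by
      simpa [div_eq_inv_mul, slope] using h
    rw [h0, sub_zero, sub_zero, div_neg_iff] at this
    rcases this with ⟨h1, h2⟩ | ⟨h1, h2⟩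
    · linarith
    · exact h1
  set t₀ := δ/2 with ht₀
  have ht₀pos : 0 < t₀ := by positivity
  have hanti : StrictAntiOn g (Set.Icc 0 t₀) := by
    apply strictAntiOn_of_deriv_neg (convex_Icc 0 t₀)
    · apply ContinuousOn.mono (s := Set.Ioo (-δ) δ) ?_ ?_
      · intro y hy
        exact ((hmem y (abs_lt.mpr ⟨hy.1, hy.2⟩)).1.continuousAt).continuousWithinAt
      · intro y hy
        exact ⟨by linarith [hy.1], by linarith [hy.2]⟩
    · intro y hy
      rw [interior_Icc] at hy
      exact hderivneg y hy.1 (by linarith [hy.2])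
  have h1 : g t₀ < g 0 := hanti ⟨le_refl 0, le_of_lt ht₀pos⟩ ⟨le_of_lt ht₀pos, le_refl t₀⟩ ht₀pos
  have h2 : g 0 ≤ g t₀ := (hmem t₀ (by rw [abs_of_pos ht₀pos]; linarith)).2.2
  linarith

variable {E : Type*} [NormedAddCommGroup E] [NormedSpace ℝ E]

lemma directional_second_test {f : E → ℝ} {p : E}
    (hf : ContDiffAt ℝ 2 f p) (hmin : IsLocalMin f p) (e : E) :
    0 ≤ iteratedFDeriv ℝ 2 f p ![e, e] := by
  set ℓ : ℝ → E := fun t => p + t • e with hℓ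
  have hℓd : ∀ t : ℝ, HasDerivAt ℓ e t := by
    intro t
    simpa [hℓ] using ((hasDerivAt_id t).smul_const e).const_add p
  have hℓ0 : ℓ 0 = p := by simp [hℓ]
  have hℓcont : Continuous ℓ := by continuity
  set g : ℝ → ℝ := fun t => f (ℓ t) with hg
  have hgmin : IsLocalMin g 0 := by
    have h' : IsLocalMin f (ℓ 0) := by rwa [hℓ0]
    have := h'.comp_continuous hℓcont.continuousAt
    exact this
  have hev : ∀ᶠ x in nhds p, ContDiffAt ℝ 2 f x := hf.eventually (by simp)
  have hevg : ∀ᶠ t in nhds (0:ℝ), ContDiffAt ℝ 2 f (ℓ t) := by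
    have : Tendsto ℓ (nhds 0) (nhds p) := by
      rw [← hℓ0]; exact hℓcont.continuousAt
    exact this.eventually hev
  have hdiffg : ∀ᶠ t in nhds (0:ℝ), DifferentiableAt ℝ g t := by
    filter_upwards [hevg] with t ht
    exact (ht.differentiableAt (by norm_num)).comp t (hℓd t).differentiableAt
  have hderiv : ∀ᶠ t in nhds (0:ℝ), deriv g t = fderiv ℝ f (ℓ t) e := by
    filter_upwards [hevg] with t ht
    have hfd : HasFDerivAt f (fderiv ℝ f (ℓ t)) (ℓ t) :=
      (ht.differentiableAt (by norm_num)).hasFDerivAt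
    exact (hfd.comp_hasDerivAt t (hℓd t)).deriv
  have hfd1 : ContDiffAt ℝ 1 (fderiv ℝ f) p := hf.fderiv_right (le_refl _)
  have hF : HasFDerivAt (fderiv ℝ f) (fderiv ℝ (fderiv ℝ f) p) p :=
    (hfd1.differentiableAt one_ne_zero).hasFDerivAt
  have hcomp : HasDerivAt (fun t => fderiv ℝ f (ℓ t)) (fderiv ℝ (fderiv ℝ f) p e) 0 := by
    have hF' : HasFDerivAt (fderiv ℝ f) (fderiv ℝ (fderiv ℝ f) p) (ℓ 0) := by rwa [hℓ0]
    exact hF'.comp_hasDerivAt 0 (hℓd 0)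
  have happ : HasDerivAt (fun t => fderiv ℝ f (ℓ t) e)
      (fderiv ℝ (fderiv ℝ f) p e e) 0 := by
    have h2 := (ContinuousLinearMap.apply ℝ ℝ e).hasFDerivAt.comp_hasDerivAt 0 hcomp
    exact h2
  have hD : HasDerivAt (deriv g) (fderiv ℝ (fderiv ℝ f) p e e) 0 :=
    happ.congr_of_eventuallyEq hderiv
  have := second_test_aux hdiffg hD hgmin
  rw [iteratedFDeriv_two_apply]
  simpa using this

end Aux

section Barrier
variable (β : ℝ) (u : EuclideanSpace ℝ (Fin 2))

noncomputable def bar (x : EuclideanSpace ℝ (Fin 2)) : ℝ :=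
  Real.exp (-β * (innerSL ℝ u x))

lemma bar_pos (x : EuclideanSpace ℝ (Fin 2)) : 0 < bar β u x := Real.exp_pos _

lemma bar_contDiff : ContDiff ℝ 2 (bar β u) :=
  (Real.contDiff_exp.of_le le_top).comp (contDiff_const.mul (innerSL ℝ u).contDiff)

lemma bar_hasFDerivAt (x : EuclideanSpace ℝ (Fin 2)) :
    HasFDerivAt (bar β u) ((-β * bar β u x) • (innerSL ℝ u : EuclideanSpace ℝ (Fin 2) →L[ℝ] ℝ)) x := by
  have h1 : HasFDerivAt (fun y : EuclideanSpace ℝ (Fin 2) => -β * (innerSL ℝ u y))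
      ((-β) • (innerSL ℝ u : EuclideanSpace ℝ (Fin 2) →L[ℝ] ℝ)) x :=
    (innerSL ℝ u).hasFDerivAt.const_mul (-β)
  have h2 := (Real.hasDerivAt_exp (-β * (innerSL ℝ u x))).comp_hasFDerivAt x h1
  have h3 : bar β u x = Real.exp (-β * (innerSL ℝ u x)) := rfl
  refine h2.congr_fderiv ?_
  rw [h3, smul_smul, mul_comm]

lemma bar_fderiv : fderiv ℝ (bar β u) = fun x =>
    ((-β * bar β u x) • (innerSL ℝ u : EuclideanSpace ℝ (Fin 2) →L[ℝ] ℝ)) :=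
  funext fun x => (bar_hasFDerivAt β u x).fderiv

lemma bar_fderiv2 (x : EuclideanSpace ℝ (Fin 2)) (e : EuclideanSpace ℝ (Fin 2)) :
    fderiv ℝ (fderiv ℝ (bar β u)) x e e = β^2 * bar β u x * (innerSL ℝ u e)^2 := by
  have hc : HasFDerivAt (fun y => -β * bar β u y)
      ((-β) • ((-β * bar β u x) • (innerSL ℝ u : EuclideanSpace ℝ (Fin 2) →L[ℝ] ℝ))) x :=
    (bar_hasFDerivAt β u x).const_mul (-β)
  have hB : HasFDerivAt (fderiv ℝ (bar β u))
      (((-β) • ((-β * bar β u x) • (innerSL ℝ u : EuclideanSpace ℝ (Fin 2) →L[ℝ] ℝ))).smulRight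
        (innerSL ℝ u : EuclideanSpace ℝ (Fin 2) →L[ℝ] ℝ)) x := by
    rw [bar_fderiv]
    exact hc.smul_const (innerSL ℝ u : EuclideanSpace ℝ (Fin 2) →L[ℝ] ℝ)
  rw [hB.fderiv]
  simp [ContinuousLinearMap.smulRight_apply]
  ring

lemma bar_lap2 (x : EuclideanSpace ℝ (Fin 2)) (hu : ‖u‖ = 1) :
    lap2 (bar β u) x = β^2 * bar β u x := by
  unfold lap2
  have key : ∀ i : Fin 2, iteratedFDeriv ℝ 2 (bar β u) x
      ![EuclideanSpace.single i 1, EuclideanSpace.single i 1]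
      = β^2 * bar β u x * (u i)^2 := by
    intro i
    rw [iteratedFDeriv_two_apply]
    have h := bar_fderiv2 β u x (EuclideanSpace.single i 1)
    simp only [Matrix.cons_val_zero, Matrix.cons_val_one, Matrix.head_cons]
    rw [h]
    congr 1
    have : (innerSL ℝ u) (EuclideanSpace.single i 1) = u i := by
      simp [EuclideanSpace.inner_single_right]
    rw [this]
  rw [Finset.sum_congr rfl (fun i _ => key i)]
  have hsum : ∑ i : Fin 2, (u i)^2 = 1 := by
    have h := EuclideanSpace.norm_eq u
    rw [hu] at h
    have h2 : (1:ℝ) = Real.sqrt (∑ i : Fin 2, ‖u i‖^2) := h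
    have h3 : ∑ i : Fin 2, ‖u i‖^2 = 1 := by
      have := congrArg (·^2) h2
      simp at this
      rw [Real.sq_sqrt (by positivity)] at this
      rw [Fin.sum_univ_two]
      simp only [Real.norm_eq_abs, sq_abs]
      linarith
    simpa [Real.norm_eq_abs, sq_abs] using h3
  rw [← Finset.mul_sum, hsum, mul_one]

end Barrier

lemma lap2_comb {φ v : EuclideanSpace ℝ (Fin 2) → ℝ} {p : EuclideanSpace ℝ (Fin 2)} (A s : ℝ)
    (hφ : ContDiff ℝ 2 φ) (hv : ContDiffAt ℝ 2 v p) :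
    lap2 (fun x => A * φ x - s * v x) p = A * lap2 φ p - s * lap2 v p := by
  have hev : ∀ᶠ x in nhds p, ContDiffAt ℝ 2 v x := hv.eventually (by simp)
  have hfe : fderiv ℝ (fun x => A * φ x - s * v x) =ᶠ[nhds p]
      fun x => A • fderiv ℝ φ x - s • fderiv ℝ v x := by
    filter_upwards [hev] with x hx
    have hvd : DifferentiableAt ℝ v x := hx.differentiableAt (by norm_num)
    have hφd : DifferentiableAt ℝ φ x := (hφ.differentiable (by norm_num)).differentiableAt
    rw [fderiv_fun_sub (hφd.const_mul A) (hvd.const_mul s), fderiv_const_mul hφd, fderiv_const_mul hvd]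
  have hφ2 : DifferentiableAt ℝ (fderiv ℝ φ) p :=
    ((hφ.fderiv_right (m := 1) (le_refl _)).differentiable one_ne_zero).differentiableAt
  have hv2 : DifferentiableAt ℝ (fderiv ℝ v) p :=
    (hv.fderiv_right (m := 1) (le_refl _)).differentiableAt one_ne_zero
  have key : ∀ e : EuclideanSpace ℝ (Fin 2),
      fderiv ℝ (fderiv ℝ (fun x => A * φ x - s * v x)) p e e
      = A * fderiv ℝ (fderiv ℝ φ) p e e - s * fderiv ℝ (fderiv ℝ v) p e e := by
    intro e
    rw [hfe.fderiv_eq]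
    rw [fderiv_fun_sub (f := fun x => A • fderiv ℝ φ x) (g := fun x => s • fderiv ℝ v x)
      (hφ2.const_smul A) (hv2.const_smul s),
      fderiv_fun_const_smul hφ2, fderiv_fun_const_smul hv2]
    simp
  unfold lap2
  simp only [iteratedFDeriv_two_apply, Matrix.cons_val_zero, Matrix.cons_val_one, Matrix.head_cons]
  rw [Finset.sum_congr rfl (fun i _ => key (EuclideanSpace.single i 1))]
  rw [Finset.sum_sub_distrib, ← Finset.mul_sum, ← Finset.mul_sum]

set_option maxHeartbeats 1000000 in
/-- Bootstrap step -/
theorem stmt_4 (R₀ m C₂ : ℝ) (hR₀ : 1 ≤ R₀) (hm0 : 0 < m) (hm1 : m < 1) (hC₂ : 0 < C₂)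
    (v : EuclideanSpace ℝ (Fin 2) → ℝ)
    (hC2 : ContDiffOn ℝ 2 v {x | R₀ ≤ ‖x‖})
    (hlim : Tendsto v (comap (fun x : EuclideanSpace ℝ (Fin 2) => ‖x‖) atTop) (nhds 0))
    (herr : ∀ x, R₀ ≤ ‖x‖ → |lap2 v x - v x| ≤ C₂ * Real.exp (-2 * m * ‖x‖)) :
    ∀ β, m < β → β < min 1 (2 * m) →
      ∃ C₃ > (0:ℝ), ∀ x, R₀ ≤ ‖x‖ → |v x| ≤ C₃ * Real.exp (-β * ‖x‖) := by
  intro β hβm hβmin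
  have hβ1 : β < 1 := lt_of_lt_of_le hβmin (min_le_left _ _)
  have hβ2m : β < 2 * m := lt_of_lt_of_le hβmin (min_le_right _ _)
  have hβ0 : 0 < β := lt_trans hm0 hβm
  -- smallness of v at infinity
  have hsmall : ∀ ε > (0:ℝ), ∃ R, ∀ x : EuclideanSpace ℝ (Fin 2), R ≤ ‖x‖ → |v x| < ε := by
    intro ε hε
    have h := Metric.tendsto_nhds.mp hlim ε hε
    rw [eventually_comap] at h
    rw [eventually_atTop] at h
    obtain ⟨R, hR⟩ := h
    exact ⟨R, fun x hx => by simpa [Real.dist_eq] using hR ‖x‖ hx x rfl⟩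
  obtain ⟨R₁, hR₁⟩ := hsmall 1 one_pos
  -- compactness of annuli
  have hKcomp : ∀ R : ℝ, IsCompact ({x : EuclideanSpace ℝ (Fin 2) | R₀ ≤ ‖x‖} ∩ {x | ‖x‖ ≤ R}) := by
    intro R
    apply IsCompact.of_isClosed_subset (isCompact_closedBall (0 : EuclideanSpace ℝ (Fin 2)) R)
    · exact (isClosed_le continuous_const continuous_norm).inter
        (isClosed_le continuous_norm continuous_const)
    · intro x hx
      simpa [Metric.mem_closedBall, dist_eq_norm] using hx.2
  -- global bound M
  obtain ⟨M, hM1, hM⟩ : ∃ M : ℝ, 1 ≤ M ∧ ∀ x, R₀ ≤ ‖x‖ → |v x| ≤ M := by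
    obtain ⟨C, hC⟩ := (hKcomp (max R₁ R₀)).exists_bound_of_continuousOn
      (hC2.continuousOn.mono Set.inter_subset_left)
    refine ⟨max C 1, le_max_right _ _, fun x hx => ?_⟩
    rcases le_or_gt ‖x‖ (max R₁ R₀) with h | h
    · have h2 := hC x ⟨hx, h⟩
      rw [Real.norm_eq_abs] at h2
      exact le_trans h2 (le_max_left _ _)
    · exact le_trans (le_of_lt (hR₁ x (le_trans (le_max_left _ _) (le_of_lt h))))
        (le_max_right _ _)
  have hM0 : (0:ℝ) < M := lt_of_lt_of_le one_pos hM1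
  have h1β : (0:ℝ) < 1 - β^2 := by nlinarith
  obtain ⟨A, hA⟩ : ∃ A : ℝ, A = C₂/(1-β^2) + M * Real.exp (β * R₀) + 1 := ⟨_, rfl⟩
  have hA0 : 0 < A := by rw [hA]; positivity
  have hAC : C₂ < A * (1-β^2) := by
    have h1 : C₂/(1-β^2) * (1-β^2) = C₂ := div_mul_cancel₀ _ (ne_of_gt h1β)
    rw [hA, add_mul, add_mul, h1]
    nlinarith [mul_pos (mul_pos hM0 (Real.exp_pos (β * R₀))) h1β, h1β]
  have hAM : M * Real.exp (β * R₀) ≤ A := by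
    have h2 : (0:ℝ) < C₂/(1-β^2) := by positivity
    rw [hA]; linarith
  -- the key comparison
  have key : ∀ s : ℝ, |s| = 1 → ∀ u : EuclideanSpace ℝ (Fin 2), ‖u‖ = 1 →
      ∀ y, R₀ ≤ ‖y‖ → 0 ≤ A * bar β u y - s * v y := by
    intro s hs u hu
    by_contra hcon
    push_neg at hcon
    obtain ⟨y₀, hy₀R, hy₀⟩ := hcon
    set w : EuclideanSpace ℝ (Fin 2) → ℝ := fun y => A * bar β u y - s * v y with hw
    have hwy : ∀ y, w y = A * bar β u y - s * v y := fun _ => rfl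
    obtain ⟨c, hc⟩ : ∃ c : ℝ, c = -(w y₀) := ⟨_, rfl⟩
    have hc0 : 0 < c := by rw [hc, hwy y₀]; linarith
    obtain ⟨R₂, hR₂⟩ := hsmall (c/2) (by positivity)
    obtain ⟨R₃, hR₃a, hR₃b⟩ : ∃ R₃ : ℝ, R₂ ≤ R₃ ∧ ‖y₀‖ ≤ R₃ :=
      ⟨max R₂ ‖y₀‖, le_max_left _ _, le_max_right _ _⟩
    have hy₀K : y₀ ∈ ({x : EuclideanSpace ℝ (Fin 2) | R₀ ≤ ‖x‖} ∩ {x | ‖x‖ ≤ R₃}) :=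
      ⟨hy₀R, hR₃b⟩
    have hwcont : ContinuousOn w ({x : EuclideanSpace ℝ (Fin 2) | R₀ ≤ ‖x‖} ∩ {x | ‖x‖ ≤ R₃}) := by
      apply ContinuousOn.sub
      · exact (continuous_const.mul (bar_contDiff β u).continuous).continuousOn
      · exact continuousOn_const.mul (hC2.continuousOn.mono Set.inter_subset_left)
    obtain ⟨p, hpK, hpmin⟩ := (hKcomp R₃).exists_isMinOn ⟨y₀, hy₀K⟩ hwcont
    have hp1 : R₀ ≤ ‖p‖ := hpK.1
    have hp2 : ‖p‖ ≤ R₃ := hpK.2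
    have hwp : w p ≤ w y₀ := (isMinOn_iff.mp hpmin) y₀ hy₀K
    have hwpneg : w p < 0 := by rw [hwy y₀] at hwp; linarith
    have hbp : 0 < bar β u p := bar_pos β u p
    have hipp : (innerSL ℝ u) p ≤ ‖p‖ := by
      have := real_inner_le_norm u p
      rwa [hu, one_mul] at this
    -- p is not on the outer boundary
    have hpR₃ : ‖p‖ < R₃ := by
      by_contra h
      push_neg at h
      have hvp : |v p| < c/2 := hR₂ p (le_trans hR₃a h)
      have hsv : s * v p ≤ |v p| := by
        calc s * v p ≤ |s * v p| := le_abs_self _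
        _ = |v p| := by rw [abs_mul, hs, one_mul]
      have hAb : 0 < A * bar β u p := by positivity
      have hwp2 : w p ≤ -c := by rw [hwy y₀] at hwp; rw [hc, hwy y₀] at hc0 ⊢; linarith
      rw [hwy p] at hwp2
      linarith
    -- p is not on the inner boundary
    have hpR₀ : R₀ < ‖p‖ := by
      rcases lt_or_eq_of_le hp1 with h | h
      · exact h
      · exfalso
        have hbarlb : Real.exp (-(β * R₀)) ≤ bar β u p := by
          unfold bar
          apply Real.exp_le_exp.mpr
          have h4 : (innerSL ℝ u) p ≤ R₀ := by rw [h]; exact hipp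
          nlinarith [mul_le_mul_of_nonneg_left h4 hβ0.le]
        have hsv : s * v p ≤ M := by
          calc s * v p ≤ |s * v p| := le_abs_self _
          _ = |v p| := by rw [abs_mul, hs, one_mul]
          _ ≤ M := hM p hp1
        have hAexp : M ≤ A * Real.exp (-(β * R₀)) := by
          have h2 := mul_le_mul_of_nonneg_right hAM (le_of_lt (Real.exp_pos (-(β*R₀))))
          rwa [mul_assoc, ← Real.exp_add, add_neg_cancel, Real.exp_zero, mul_one] at h2
        have h3 : A * Real.exp (-(β * R₀)) ≤ A * bar β u p :=
          mul_le_mul_of_nonneg_left hbarlb (le_of_lt hA0)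
        rw [hwy p] at hwpneg
        linarith
    -- interior local minimum
    have hopen : IsOpen {x : EuclideanSpace ℝ (Fin 2) | R₀ < ‖x‖ ∧ ‖x‖ < R₃} :=
      (isOpen_lt continuous_const continuous_norm).inter (isOpen_lt continuous_norm continuous_const)
    have hlocmin : IsLocalMin w p := by
      have hpmem : p ∈ {x : EuclideanSpace ℝ (Fin 2) | R₀ < ‖x‖ ∧ ‖x‖ < R₃} := ⟨hpR₀, hpR₃⟩
      filter_upwards [hopen.mem_nhds hpmem] with y hy
      have hy' : R₀ < ‖y‖ ∧ ‖y‖ < R₃ := hy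
      exact (isMinOn_iff.mp hpmin) y ⟨le_of_lt hy'.1, le_of_lt hy'.2⟩
    -- regularity at p
    have hnhds : {x : EuclideanSpace ℝ (Fin 2) | R₀ ≤ ‖x‖} ∈ nhds p := by
      apply Filter.mem_of_superset
        ((isOpen_lt continuous_const continuous_norm).mem_nhds (show R₀ < ‖p‖ from hpR₀))
      intro y hy
      have hy' : R₀ < ‖y‖ := hy
      exact le_of_lt hy'
    have hvCp : ContDiffAt ℝ 2 v p := hC2.contDiffAt hnhds
    have hwCp : ContDiffAt ℝ 2 w p :=
      (contDiffAt_const.mul (bar_contDiff β u).contDiffAt).sub (contDiffAt_const.mul hvCp)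
    -- second derivative test
    have hlap : 0 ≤ lap2 w p :=
      Finset.sum_nonneg fun i _ => directional_second_test hwCp hlocmin _
    have hcomb : lap2 w p = A * lap2 (bar β u) p - s * lap2 v p :=
      lap2_comb A s (bar_contDiff β u) hvCp
    have hbarlap : lap2 (bar β u) p = β^2 * bar β u p := bar_lap2 β u p hu
    have herrp := herr p hp1
    have h1 : -(C₂ * Real.exp (-2*m*‖p‖)) ≤ s * (lap2 v p - v p) := by
      have habs : |s * (lap2 v p - v p)| = |lap2 v p - v p| := by rw [abs_mul, hs, one_mul]
      have h5 := neg_abs_le (s * (lap2 v p - v p))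
      rw [habs] at h5
      linarith
    have h2 : Real.exp (-2*m*‖p‖) ≤ bar β u p := by
      unfold bar
      apply Real.exp_le_exp.mpr
      nlinarith [mul_le_mul_of_nonneg_left hipp hβ0.le,
        mul_le_mul_of_nonneg_right hβ2m.le (norm_nonneg p)]
    have h3 : A * bar β u p < s * v p := by
      rw [hwy p] at hwpneg
      linarith
    rw [hcomb, hbarlap] at hlap
    have hcb : C₂ * Real.exp (-2*m*‖p‖) ≤ C₂ * bar β u p :=
      mul_le_mul_of_nonneg_left h2 hC₂.le
    have hfin2 : 0 < A * (β^2 * bar β u p) - A * bar β u p + C₂ * bar β u p := by linarith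
    have hfin3 := mul_pos hbp (sub_pos.mpr hAC)
    nlinarith [hfin2, hfin3]
  -- conclude
  refine ⟨A, hA0, fun x hx => ?_⟩
  have hx1 : (1:ℝ) ≤ ‖x‖ := le_trans hR₀ hx
  have hx0 : ‖x‖ ≠ 0 := by positivity
  have hu : ‖(‖x‖⁻¹ • x : EuclideanSpace ℝ (Fin 2))‖ = 1 := by
    rw [norm_smul, norm_inv, norm_norm]
    exact inv_mul_cancel₀ hx0
  have hip : (innerSL ℝ (‖x‖⁻¹ • x : EuclideanSpace ℝ (Fin 2))) x = ‖x‖ := by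
    have h6 : (innerSL ℝ (‖x‖⁻¹ • x : EuclideanSpace ℝ (Fin 2))) x
        = inner ℝ (‖x‖⁻¹ • x : EuclideanSpace ℝ (Fin 2)) x := rfl
    rw [h6, real_inner_smul_left, real_inner_self_eq_norm_sq]
    field_simp
  have hbx : bar β (‖x‖⁻¹ • x) x = Real.exp (-β * ‖x‖) := by unfold bar; rw [hip]
  have k1 := key 1 (by norm_num) _ hu x hx
  have k2 := key (-1) (by norm_num) _ hu x hx
  rw [hbx] at k1 k2
  rw [abs_le]
  constructor <;> linarith [k1, k2]
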